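/- For l = 1 and κ < 0, the function v(r) = sqrt(-3/(2κ)) · D_1( exp(2κr/3) + exp(-2πi/3) exp((2/3)e^{-iπ/3} κ r) + exp(2πi/3) exp((2/3)e^{iπ/3} κ r) ) is real-valued for r > 0 and satisfies (T_1)³ v = z_p⁶ v with z_p = -(2/3) e^{iπ/6} κ, i.e. the eigenvalue z_p⁶ = -(2κ/3)⁶ · e^{iπ} = -(2|κ|/3)⁶ is negative. -/

import Mathlib

open Complex

/-- The operator `D_l w (r) = r^{l+1} ((1/r) d/dr)^l (w(r)/r)`. -/
noncomputable def Dop (l : ℕ) (w : ℝ → ℂ) : ℝ → ℂ :=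
  fun r => (r : ℂ) ^ (l + 1) *
    ((fun f : ℝ → ℂ => fun r => (r : ℂ)⁻¹ * deriv f r)^[l] (fun r => w r / r)) r

/-- The operator `T_l u = -u'' + l(l+1)/r² u`. -/
noncomputable def Tl (l : ℕ) (u : ℝ → ℂ) : ℝ → ℂ :=
  fun r => -(deriv (deriv u) r) + ((l : ℂ) * (l + 1) / (r : ℂ) ^ 2) * u r

namespace DSaux

/-- `U a r = e^{ar}(a - 1/r)`, the result of applying `D₁` to `e^{ar}`. -/
noncomputable def U (a : ℂ) (r : ℝ) : ℂ := Complex.exp (a * r) * (a - (r:ℂ)⁻¹)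
noncomputable def U1 (a : ℂ) (r : ℝ) : ℂ :=
  Complex.exp (a * r) * (a^2 - a * (r:ℂ)⁻¹ + (r:ℂ)⁻¹ * (r:ℂ)⁻¹)
noncomputable def U2 (a : ℂ) (r : ℝ) : ℂ :=
  Complex.exp (a * r) * (a^3 - a^2 * (r:ℂ)⁻¹ + 2*a*((r:ℂ)⁻¹*(r:ℂ)⁻¹) - 2*((r:ℂ)⁻¹*(r:ℂ)⁻¹*(r:ℂ)⁻¹))

lemma hasDerivAt_coe (r : ℝ) : HasDerivAt (fun s : ℝ => (s : ℂ)) 1 r := by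
  simpa using (hasDerivAt_id r).ofReal_comp

lemma hexp (a : ℂ) (r : ℝ) :
    HasDerivAt (fun s : ℝ => Complex.exp (a * s)) (Complex.exp (a * r) * a) r := by
  simpa using ((hasDerivAt_coe r).const_mul a).cexp

lemma hinv {r : ℝ} (hr : r ≠ 0) :
    HasDerivAt (fun s : ℝ => ((s:ℂ))⁻¹) (-(((r:ℂ))⁻¹^2)) r := by
  have hr' : (r:ℂ) ≠ 0 := by exact_mod_cast hr
  have h := (hasDerivAt_inv hr').comp_ofReal
  convert h using 1
  field_simp

lemma hU (a : ℂ) {r : ℝ} (hr : r ≠ 0) : HasDerivAt (U a) (U1 a r) r := by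
  have h := (hexp a r).mul ((hasDerivAt_const r a).sub (hinv hr))
  refine h.congr_deriv ?_
  simp only [U1, U, Pi.sub_apply, Pi.add_apply, Pi.mul_apply]
  ring

lemma hU1 (a : ℂ) {r : ℝ} (hr : r ≠ 0) : HasDerivAt (U1 a) (U2 a r) r := by
  have h := (hexp a r).mul
    (((hasDerivAt_const r (a^2)).sub ((hinv hr).const_mul a)).add ((hinv hr).mul (hinv hr)))
  refine h.congr_deriv ?_
  simp only [U2, U1, Pi.sub_apply, Pi.add_apply, Pi.mul_apply]
  ring

/-- A linear combination of three `U`'s. -/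
noncomputable def S3 (C c₁ c₂ c₃ a₁ a₂ a₃ : ℂ) (r : ℝ) : ℂ :=
  C * (c₁ * U a₁ r + c₂ * U a₂ r + c₃ * U a₃ r)

noncomputable def S3' (C c₁ c₂ c₃ a₁ a₂ a₃ : ℂ) (r : ℝ) : ℂ :=
  C * (c₁ * U1 a₁ r + c₂ * U1 a₂ r + c₃ * U1 a₃ r)

noncomputable def S3'' (C c₁ c₂ c₃ a₁ a₂ a₃ : ℂ) (r : ℝ) : ℂ :=
  C * (c₁ * U2 a₁ r + c₂ * U2 a₂ r + c₃ * U2 a₃ r)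

lemma hS3 (C c₁ c₂ c₃ a₁ a₂ a₃ : ℂ) {r : ℝ} (hr : r ≠ 0) :
    HasDerivAt (S3 C c₁ c₂ c₃ a₁ a₂ a₃) (S3' C c₁ c₂ c₃ a₁ a₂ a₃ r) r :=
  ((((hU a₁ hr).const_mul c₁).add ((hU a₂ hr).const_mul c₂)).add
      ((hU a₃ hr).const_mul c₃)).const_mul C

lemma hS3' (C c₁ c₂ c₃ a₁ a₂ a₃ : ℂ) {r : ℝ} (hr : r ≠ 0) :
    HasDerivAt (S3' C c₁ c₂ c₃ a₁ a₂ a₃) (S3'' C c₁ c₂ c₃ a₁ a₂ a₃ r) r :=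
  ((((hU1 a₁ hr).const_mul c₁).add ((hU1 a₂ hr).const_mul c₂)).add
      ((hU1 a₃ hr).const_mul c₃)).const_mul C


lemma Tl_step (C c₁ c₂ c₃ a₁ a₂ a₃ : ℂ) (f : ℝ → ℂ)
    (hf : ∀ s : ℝ, s ≠ 0 → f s = S3 C c₁ c₂ c₃ a₁ a₂ a₃ s) {r : ℝ} (hr : r ≠ 0) :
    Tl 1 f r = S3 C (c₁ * (-a₁^2)) (c₂ * (-a₂^2)) (c₃ * (-a₃^2)) a₁ a₂ a₃ r := by
  have hmem : {s : ℝ | s ≠ 0} ∈ nhds r := isOpen_compl_singleton.mem_nhds hr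
  have hfg : f =ᶠ[nhds r] S3 C c₁ c₂ c₃ a₁ a₂ a₃ :=
    Filter.eventuallyEq_of_mem hmem fun s hs => hf s hs
  have h2 : deriv (S3 C c₁ c₂ c₃ a₁ a₂ a₃) =ᶠ[nhds r] S3' C c₁ c₂ c₃ a₁ a₂ a₃ :=
    Filter.eventuallyEq_of_mem hmem fun s hs => (hS3 C c₁ c₂ c₃ a₁ a₂ a₃ hs).deriv
  have h3 : deriv (deriv f) r = S3'' C c₁ c₂ c₃ a₁ a₂ a₃ r := by
    rw [(hfg.deriv.trans h2).deriv_eq]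
    exact (hS3' C c₁ c₂ c₃ a₁ a₂ a₃ hr).deriv
  have hr' : (r:ℂ) ≠ 0 := by exact_mod_cast hr
  show -(deriv (deriv f) r) + ((1:ℕ) * ((1:ℕ) + 1) / (r:ℂ)^2) * f r = _
  rw [h3, hf r hr]
  have h4 : ((1:ℂ) * (1 + 1) / (r:ℂ)^2) = 2 * ((r:ℂ)⁻¹ * (r:ℂ)⁻¹) := by
    rw [sq]
    field_simp
    norm_num
  rw [Nat.cast_one, h4]
  simp only [S3, S3'', U, U2]
  ring


noncomputable def A1 (k : ℝ) : ℂ := 2 * k / 3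
noncomputable def A2 (k : ℝ) : ℂ := 2 / 3 * Complex.exp (-(Complex.I * Real.pi) / 3) * k
noncomputable def A3 (k : ℝ) : ℂ := 2 / 3 * Complex.exp (Complex.I * Real.pi / 3) * k
noncomputable def CC (k : ℝ) : ℂ := (Real.sqrt (-3 / (2 * k)) : ℂ)
noncomputable def K2 : ℂ := Complex.exp (-(2 * Real.pi * Complex.I) / 3)
noncomputable def K3 : ℂ := Complex.exp (2 * Real.pi * Complex.I / 3)

lemma e1 : Complex.exp (Complex.I * Real.pi / 6) ^ 6 = -1 := by
  rw [← Complex.exp_nat_mul,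
    show ((6:ℕ):ℂ) * (Complex.I * (Real.pi:ℂ) / 6) = (Real.pi:ℂ) * Complex.I by push_cast; ring,
    Complex.exp_pi_mul_I]

lemma e2 : Complex.exp (-(Complex.I * Real.pi) / 3) ^ 6 = 1 := by
  rw [← Complex.exp_nat_mul,
    show ((6:ℕ):ℂ) * (-(Complex.I * (Real.pi:ℂ)) / 3) = -(2 * (Real.pi:ℂ) * Complex.I) by
      push_cast; ring,
    Complex.exp_neg, Complex.exp_two_pi_mul_I, inv_one]

lemma e3 : Complex.exp (Complex.I * Real.pi / 3) ^ 6 = 1 := by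
  rw [← Complex.exp_nat_mul,
    show ((6:ℕ):ℂ) * (Complex.I * (Real.pi:ℂ) / 3) = 2 * (Real.pi:ℂ) * Complex.I by
      push_cast; ring,
    Complex.exp_two_pi_mul_I]

lemma conjU (a : ℂ) (r : ℝ) : (starRingEnd ℂ) (U a r) = U ((starRingEnd ℂ) a) r := by
  simp [U, ← Complex.exp_conj, map_mul, map_sub, map_inv₀, Complex.conj_ofReal]

lemma conjA1 (k : ℝ) : (starRingEnd ℂ) (A1 k) = A1 k := by
  simp [A1, map_mul, map_div₀, map_ofNat, Complex.conj_ofReal]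

lemma conjA2 (k : ℝ) : (starRingEnd ℂ) (A2 k) = A3 k := by
  simp [A2, A3, map_mul, map_div₀, map_neg, map_ofNat, ← Complex.exp_conj, Complex.conj_I,
    Complex.conj_ofReal]

lemma conjA3 (k : ℝ) : (starRingEnd ℂ) (A3 k) = A2 k := by
  simp [A2, A3, map_mul, map_div₀, map_neg, map_ofNat, ← Complex.exp_conj, Complex.conj_I,
    Complex.conj_ofReal]

lemma conjK2 : (starRingEnd ℂ) K2 = K3 := by
  simp [K2, K3, map_mul, map_div₀, map_neg, map_ofNat, ← Complex.exp_conj, Complex.conj_I,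
    Complex.conj_ofReal]

lemma conjK3 : (starRingEnd ℂ) K3 = K2 := by
  simp [K2, K3, map_mul, map_div₀, map_neg, map_ofNat, ← Complex.exp_conj, Complex.conj_I,
    Complex.conj_ofReal]

lemma conjCC (k : ℝ) : (starRingEnd ℂ) (CC k) = CC k := Complex.conj_ofReal _

/-- Unfolding `Dop 1` on the explicit sum of three exponentials. -/
lemma v_eq (k : ℝ) {s : ℝ} (hs : s ≠ 0) :
    (Real.sqrt (-3 / (2 * k)) : ℂ) *
      Dop 1 (fun t : ℝ =>
        Complex.exp (2 * k * t / 3)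
        + Complex.exp (-(2 * Real.pi * Complex.I) / 3) *
            Complex.exp ((2 / 3) * Complex.exp (-(Complex.I * Real.pi) / 3) * k * t)
        + Complex.exp (2 * Real.pi * Complex.I / 3) *
            Complex.exp ((2 / 3) * Complex.exp (Complex.I * Real.pi / 3) * k * t)) s
    = S3 (CC k) 1 K2 K3 (A1 k) (A2 k) (A3 k) s := by
  have hs' : (s:ℂ) ≠ 0 := by exact_mod_cast hs
  have hnum : HasDerivAt
      (fun t : ℝ => Complex.exp (A1 k * t) + K2 * Complex.exp (A2 k * t)
        + K3 * Complex.exp (A3 k * t))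
      (Complex.exp (A1 k * s) * A1 k + K2 * (Complex.exp (A2 k * s) * A2 k)
        + K3 * (Complex.exp (A3 k * s) * A3 k)) s :=
    ((hexp (A1 k) s).add ((hexp (A2 k) s).const_mul K2)).add ((hexp (A3 k) s).const_mul K3)
  have hdiv := hnum.div (hasDerivAt_coe s) hs'
  have hfun : (fun t : ℝ =>
      (Complex.exp (2 * k * t / 3)
        + Complex.exp (-(2 * Real.pi * Complex.I) / 3) *
            Complex.exp ((2 / 3) * Complex.exp (-(Complex.I * Real.pi) / 3) * k * t)
        + Complex.exp (2 * Real.pi * Complex.I / 3) *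
            Complex.exp ((2 / 3) * Complex.exp (Complex.I * Real.pi / 3) * k * t)) / (t:ℂ))
      = (fun t : ℝ => (Complex.exp (A1 k * t) + K2 * Complex.exp (A2 k * t)
          + K3 * Complex.exp (A3 k * t)) / (t:ℂ)) := by
    funext t
    rw [show 2 * (k:ℂ) * t / 3 = A1 k * t by rw [A1]; ring]
    rfl
  show (Real.sqrt (-3 / (2 * k)) : ℂ) * ((s:ℂ) ^ (1 + 1) * ((s:ℂ)⁻¹ * deriv _ s)) = _
  rw [hfun, show deriv (fun t : ℝ => (Complex.exp (A1 k * t) + K2 * Complex.exp (A2 k * t)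
          + K3 * Complex.exp (A3 k * t)) / (t:ℂ)) s = _ from hdiv.deriv]
  simp only [S3, U, CC]
  field_simp
  ring

end DSaux

/-- For `l = 1`, `κ < 0`, the discrete-spectrum eigenvector is real-valued and satisfies
`(T₁)³ v = z_p⁶ v` with `z_p = -(2/3) e^{iπ/6} κ` and negative eigenvalue
`z_p⁶ = -(2|κ|/3)⁶`. -/
theorem discrete_spectrum_l_one (κ : ℝ) (hκ : κ < 0) :
    let v : ℝ → ℂ := fun r =>
      (Real.sqrt (-3 / (2 * κ)) : ℂ) *
        Dop 1 (fun s : ℝ =>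
          Complex.exp (2 * κ * s / 3)
          + Complex.exp (-(2 * Real.pi * Complex.I) / 3) *
              Complex.exp ((2 / 3) * Complex.exp (-(Complex.I * Real.pi) / 3) * κ * s)
          + Complex.exp (2 * Real.pi * Complex.I / 3) *
              Complex.exp ((2 / 3) * Complex.exp (Complex.I * Real.pi / 3) * κ * s)) r
    let zp : ℂ := -(2 / 3) * Complex.exp (Complex.I * Real.pi / 6) * κ
    (∀ r ∈ Set.Ioi (0 : ℝ), (v r).im = 0 ∧ (Tl 1)^[3] v r = zp ^ 6 * v r) ∧
      zp ^ 6 = -((2 * |κ| / 3 : ℝ) ^ 6 : ℂ) := by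
  intro v zp
  open DSaux in
  have hv : ∀ s : ℝ, s ≠ 0 → v s = S3 (CC κ) 1 K2 K3 (A1 κ) (A2 κ) (A3 κ) s :=
    fun s hs => v_eq κ hs
  have h1 : ∀ s : ℝ, s ≠ 0 → Tl 1 v s =
      S3 (CC κ) (1 * (-(A1 κ)^2)) (K2 * (-(A2 κ)^2)) (K3 * (-(A3 κ)^2))
        (A1 κ) (A2 κ) (A3 κ) s :=
    fun s hs => Tl_step _ _ _ _ _ _ _ v hv hs
  have h2 : ∀ s : ℝ, s ≠ 0 → Tl 1 (Tl 1 v) s =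
      S3 (CC κ) (1 * (-(A1 κ)^2) * (-(A1 κ)^2)) (K2 * (-(A2 κ)^2) * (-(A2 κ)^2))
        (K3 * (-(A3 κ)^2) * (-(A3 κ)^2)) (A1 κ) (A2 κ) (A3 κ) s :=
    fun s hs => Tl_step _ _ _ _ _ _ _ _ h1 hs
  have h3 : ∀ s : ℝ, s ≠ 0 → Tl 1 (Tl 1 (Tl 1 v)) s =
      S3 (CC κ) (1 * (-(A1 κ)^2) * (-(A1 κ)^2) * (-(A1 κ)^2))
        (K2 * (-(A2 κ)^2) * (-(A2 κ)^2) * (-(A2 κ)^2))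
        (K3 * (-(A3 κ)^2) * (-(A3 κ)^2) * (-(A3 κ)^2)) (A1 κ) (A2 κ) (A3 κ) s :=
    fun s hs => Tl_step _ _ _ _ _ _ _ _ h2 hs
  have hzp6 : zp ^ 6 = -((2 * (κ:ℂ) / 3) ^ 6) := by
    show (-(2 / 3) * Complex.exp (Complex.I * Real.pi / 6) * κ) ^ 6 = _
    linear_combination ((2 * (κ:ℂ) / 3) ^ 6) * e1
  constructor
  · intro r hr
    have hr0 : r ≠ 0 := ne_of_gt hr
    constructor
    · rw [hv r hr0]
      refine Complex.conj_eq_iff_im.mp ?_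
      simp only [S3, map_mul, map_add, map_one, conjU, conjA1, conjA2, conjA3,
        conjK2, conjK3, conjCC]
      ring
    · show Tl 1 (Tl 1 (Tl 1 v)) r = zp ^ 6 * v r
      rw [h3 r hr0, hv r hr0, hzp6]
      simp only [S3]
      rw [show (1:ℂ) * (-(A1 κ)^2) * (-(A1 κ)^2) * (-(A1 κ)^2)
            = -((2 * (κ:ℂ) / 3) ^ 6) * 1 by rw [A1]; ring,
        show K2 * (-(A2 κ)^2) * (-(A2 κ)^2) * (-(A2 κ)^2)
            = -((2 * (κ:ℂ) / 3) ^ 6) * K2 by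
          rw [A2]; linear_combination (-(2/3:ℂ)^6 * (κ:ℂ)^6 * K2) * e2,
        show K3 * (-(A3 κ)^2) * (-(A3 κ)^2) * (-(A3 κ)^2)
            = -((2 * (κ:ℂ) / 3) ^ 6) * K3 by
          rw [A3]; linear_combination (-(2/3:ℂ)^6 * (κ:ℂ)^6 * K3) * e3]
      ring
  · rw [hzp6, abs_of_neg hκ]
    push_cast
    ring
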